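/- Let F : ℝ^m → ℝ^k be a hard-tanh network with n hidden layers of width k. Then the number of distinct activation patterns realized by F as the input ranges over all of ℝ^m is at most (∑_{i=0}^{m} C(2k,i))^n; in particular it is O((2k)^{mn}), uniformly over all choices of the weights and biases. -/

import Mathlib

/-- The hard-tanh nonlinearity `φ(u) = max (−1) (min 1 u)`. -/
noncomputable def hardTanh (u : ℝ) : ℝ := max (-1) (min 1 u)

/-- Preactivations of a hard-tanh network: `h^{(0)} = W^{(0)} x + b^{(0)}`, and
`h^{(d+1)} = W^{(d+1)} φ(h^{(d)}) + b^{(d+1)}`, with `φ` the hard-tanh applied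
coordinatewise. -/
noncomputable def htPreact {m k : ℕ} (W0 : Matrix (Fin k) (Fin m) ℝ)
    (W : ℕ → Matrix (Fin k) (Fin k) ℝ) (b : ℕ → Fin k → ℝ) (x : Fin m → ℝ) :
    ℕ → Fin k → ℝ
  | 0 => W0.mulVec x + b 0
  | d + 1 => (W (d + 1)).mulVec (fun i => hardTanh (htPreact W0 W b x d i)) + b (d + 1)

/-- The activation pattern of a hard-tanh network at input `x`: for every hidden neuron it
records in `{-1, 0, 1}` whether its preactivation satisfies `h ≤ −1`, `−1 < h < 1`, or
`h ≥ 1`. -/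
noncomputable def htActivationPattern (m k n : ℕ) (W0 : Matrix (Fin k) (Fin m) ℝ)
    (W : ℕ → Matrix (Fin k) (Fin k) ℝ) (b : ℕ → Fin k → ℝ) (x : Fin m → ℝ) :
    Fin n → Fin k → ℤ :=
  fun d i =>
    if htPreact W0 W b x d i ≤ -1 then -1
    else if 1 ≤ htPreact W0 W b x d i then 1
    else 0

def signBound (N m : ℕ) : ℕ := ∑ i ∈ Finset.range (m+1), Nat.choose N i

lemma signBound_pos (N m : ℕ) : 1 ≤ signBound N m := by
  have : Nat.choose N 0 ≤ signBound N m :=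
    Finset.single_le_sum (f := fun i => Nat.choose N i) (by intro i _; positivity)
      (Finset.mem_range.2 (by omega))
  simpa using this

lemma signBound_mono (N m : ℕ) : signBound N m ≤ signBound (N+1) m :=
  Finset.sum_le_sum fun i _ => Nat.choose_le_choose i (Nat.le_succ N)

lemma signBound_pascal (N m : ℕ) :
    signBound (N+1) (m+1) = signBound N (m+1) + signBound N m := by
  unfold signBound
  rw [Finset.sum_range_succ' (fun i => Nat.choose (N+1) i) (m+1)]
  simp only [Nat.choose_succ_succ, Nat.choose_zero_right]
  rw [Finset.sum_add_distrib]
  conv_rhs => rw [Finset.sum_range_succ' (fun i => Nat.choose N i) (m+1)]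
  simp only [Nat.choose_zero_right, Nat.succ_eq_add_one]
  omega

lemma nat_card_le_one {β : Type*} [Subsingleton β] : Nat.card β ≤ 1 := by
  rcases isEmpty_or_nonempty β with h|⟨⟨a⟩⟩
  · simp [Nat.card_of_isEmpty]
  · exact le_of_eq (Nat.card_of_subsingleton a)

lemma nat_card_set_le_one {β : Type*} {s : Set β} (hs : s.Subsingleton) : Nat.card s ≤ 1 := by
  haveI := hs.coe_sort
  exact nat_card_le_one

lemma affine_decomp {E : Type*} [AddCommGroup E] [Module ℝ E] (f : E →ᵃ[ℝ] ℝ) (x y : E) :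
    f x = f.linear (x - y) + f y := by
  have := f.map_vadd y (x - y)
  simpa [vadd_eq_add, sub_add_cancel] using this

lemma cross_point {E : Type*} [AddCommGroup E] [Module ℝ E] {N : ℕ}
    (h : E →ᵃ[ℝ] ℝ) (g : Fin N → E →ᵃ[ℝ] ℝ) {x y : E}
    (hx : h x ≤ 0) (hy : 0 < h y) (hp : ∀ j, (g j x ≤ 0 ↔ g j y ≤ 0)) :
    ∃ w : E, h w = 0 ∧ ∀ j, (g j w ≤ 0 ↔ g j x ≤ 0) := by
  set t : ℝ := h y / (h y - h x) with ht
  have hd : 0 < h y - h x := by linarith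
  have ht0 : 0 ≤ t := le_of_lt (div_pos hy hd)
  have ht1 : t ≤ 1 := (div_le_one hd).2 (by linarith)
  refine ⟨y + t • (x - y), ?_, ?_⟩
  · have e : h (y + t • (x - y)) = t * (h x - h y) + h y := by
      have h1 := affine_decomp h (y + t • (x - y)) y
      have h2 : (y + t • (x - y)) - y = t • (x - y) := by abel
      have h3 : h.linear (x - y) = h x - h y := by
        have := affine_decomp h x y; linarith
      rw [h2] at h1
      rw [h1, map_smul, h3]; simp [smul_eq_mul]
    rw [e, ht]; field_simp; ring
  · intro j
    have e : g j (y + t • (x - y)) = t * (g j x - g j y) + g j y := by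
      have h1 := affine_decomp (g j) (y + t • (x - y)) y
      have h2 : (y + t • (x - y)) - y = t • (x - y) := by abel
      have h3 : (g j).linear (x - y) = g j x - g j y := by
        have := affine_decomp (g j) x y; linarith
      rw [h2] at h1
      rw [h1, map_smul, h3]; simp [smul_eq_mul]
    rw [e]
    set a := g j x
    set b := g j y
    constructor
    · intro hw
      by_contra ha
      push_neg at ha
      have hb : 0 < b := lt_of_not_ge fun hb0 => absurd ((hp j).2 hb0) (not_le.2 ha)
      have hm : 0 < min a b := lt_min ha hb
      have e1 : t * min a b ≤ t * a := mul_le_mul_of_nonneg_left (min_le_left a b) ht0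
      have e2 : (1 - t) * min a b ≤ (1 - t) * b :=
        mul_le_mul_of_nonneg_left (min_le_right a b) (by linarith)
      nlinarith
    · intro ha
      have hb : b ≤ 0 := (hp j).1 ha
      nlinarith

lemma affine_sign_card_le :
    ∀ (N m : ℕ) (E : Type) [AddCommGroup E] [Module ℝ E] [FiniteDimensional ℝ E],
    Module.finrank ℝ E ≤ m → ∀ (g : Fin N → E →ᵃ[ℝ] ℝ),
    Nat.card (Set.range fun x : E => fun j : Fin N => decide (g j x ≤ 0)) ≤ signBound N m := by
  intro N
  induction N with
  | zero =>
    intro m E _ _ _ _ g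
    refine le_trans (nat_card_set_le_one ?_) (signBound_pos 0 m)
    intro p _ q _
    funext j; exact j.elim0
  | succ N IH =>
    intro m E _ _ _ hE g
    rcases subsingleton_or_nontrivial E with hS | hNT
    · refine le_trans (nat_card_set_le_one ?_) (signBound_pos _ m)
      rintro p ⟨xp, rfl⟩ q ⟨xq, rfl⟩
      rw [Subsingleton.elim xp xq]
    · -- E nontrivial, so finrank ≥ 1, so m ≥ 1
      have hpos : 0 < Module.finrank ℝ E := Module.finrank_pos
      obtain ⟨m', rfl⟩ : ∃ m', m = m' + 1 := ⟨m - 1, by omega⟩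
      set h : E →ᵃ[ℝ] ℝ := g (Fin.last N) with hh
      set g' : Fin N → E →ᵃ[ℝ] ℝ := fun j => g j.castSucc with hg'
      set Φ : E → Fin (N+1) → Bool := fun x j => decide (g j x ≤ 0) with hΦ
      set Φ' : E → Fin N → Bool := fun x j => decide (g' j x ≤ 0) with hΦ'
      have htrunc : ∀ x, (fun j : Fin N => Φ x j.castSucc) = Φ' x := by
        intro x; funext j; simp [hΦ, hΦ', hg']
      by_cases hlin : h.linear = 0
      · -- last functional is constant; patterns determined by truncation
        have hconst : ∀ x y : E, h x = h y := by
          intro x y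
          have := affine_decomp h x y
          rw [hlin] at this; simpa using this
        have : Nat.card (Set.range Φ) ≤ Nat.card (Set.range Φ') := by
          refine Nat.card_le_card_of_injective
            (fun p => ⟨fun j => (p : Fin (N+1) → Bool) j.castSucc, ?_⟩) ?_
          · obtain ⟨x, hx⟩ := p.2
            exact ⟨x, by rw [← hx]⟩
          · rintro ⟨p, xp, hp⟩ ⟨q, xq, hq⟩ hpq
            simp only [Subtype.mk.injEq] at hpq ⊢
            refine Subtype.ext (?_ : p = q)
            funext j
            refine Fin.lastCases ?_ ?_ j
            · subst hp; subst hq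
              simp only [hΦ]
              have : g (Fin.last N) xp = g (Fin.last N) xq := hconst xp xq
              simp [this]
            · intro i; exact congrFun hpq i
        calc Nat.card (Set.range Φ) ≤ Nat.card (Set.range Φ') := this
          _ ≤ signBound N (m'+1) := IH (m'+1) E hE g'
          _ ≤ signBound (N+1) (m'+1) := signBound_mono _ _
      · -- last functional has nonzero linear part
        obtain ⟨v, hv⟩ : ∃ v, h.linear v ≠ 0 := by
          by_contra hc; push_neg at hc
          exact hlin (LinearMap.ext fun w => by simpa using hc w)
        set x₀ : E := (-(h 0) / h.linear v) • v with hx₀def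
        have hx₀ : h x₀ = 0 := by
          have := affine_decomp h x₀ 0
          rw [sub_zero] at this
          rw [this, hx₀def, map_smul, smul_eq_mul, div_mul_cancel₀ _ hv]
          ring
        set U := LinearMap.ker h.linear with hU
        have hUrank : Module.finrank ℝ U ≤ m' := by
          have hr := LinearMap.finrank_range_add_finrank_ker h.linear
          have hrange : LinearMap.range h.linear = ⊤ := by
            rcases (inferInstance : IsSimpleOrder (Submodule ℝ ℝ)).eq_bot_or_eq_top
                (LinearMap.range h.linear) with h1 | h2
            · exfalso
              have hmem := LinearMap.mem_range_self h.linear v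
              rw [h1] at hmem
              simp only [Submodule.mem_bot] at hmem
              exact hv hmem
            · exact h2
          rw [hrange] at hr
          have h1 : Module.finrank ℝ (⊤ : Submodule ℝ ℝ) = 1 := by simp
          rw [hU]
          omega
        have hι : ∃ ι : U →ᵃ[ℝ] E, ∀ u : U, ι u = x₀ + (u : E) := by
          refine ⟨AffineMap.mk (fun u => x₀ + (u : E)) U.subtype ?_, fun u => rfl⟩
          intro p v
          show x₀ + ((v + p : U) : E) = (v : E) +ᵥ (x₀ + (p : E))
          push_cast
          simp only [vadd_eq_add]
          abel
        obtain ⟨ι, hιeq⟩ := hι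
        set gg : Fin N → U →ᵃ[ℝ] ℝ := fun j => (g' j).comp ι with hgg
        set Ψ : U → Fin N → Bool := fun u j => decide (gg j u ≤ 0) with hΨ
        have hΨcard : Nat.card (Set.range Ψ) ≤ signBound N m' := IH m' U hUrank gg
        have hΦ'card : Nat.card (Set.range Φ') ≤ signBound N (m'+1) := IH (m'+1) E hE g'
        have hdup : ∀ x y : E, Φ' x = Φ' y → h x ≤ 0 → 0 < h y → Φ' x ∈ Set.range Ψ := by
          intro x y hxy hx hy
          have hp : ∀ j, (g' j x ≤ 0 ↔ g' j y ≤ 0) := by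
            intro j
            have := congrFun hxy j
            simpa [hΦ', decide_eq_decide] using this
          obtain ⟨w, hw0, hwp⟩ := cross_point h g' hx hy hp
          have hwU : w - x₀ ∈ U := by
            rw [hU, LinearMap.mem_ker]
            have hdec := affine_decomp h w x₀
            rw [hx₀] at hdec
            linarith
          refine ⟨⟨w - x₀, hwU⟩, ?_⟩
          funext j
          have heval : gg j ⟨w - x₀, hwU⟩ = g' j w := by
            simp only [hgg, AffineMap.comp_apply]
            rw [hιeq]
            congr 1
            show x₀ + (w - x₀) = w
            abel
          simp only [hΨ, hΦ', heval, decide_eq_decide]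
          exact hwp j
        have hmem : ∀ p : Fin (N+1) → Bool, p ∈ Set.range Φ →
            (fun j : Fin N => p j.castSucc) ∈ Set.range Φ' := by
          rintro p ⟨x, hx⟩
          exact ⟨x, by rw [← hx]⟩
        classical
        have key : Nat.card (Set.range Φ) ≤
            Nat.card (Set.range Φ') + Nat.card (Set.range Ψ) := by
          rw [← Nat.card_sum]
          refine Nat.card_le_card_of_injective
            (fun p => if hc : (p : Fin (N+1) → Bool) (Fin.last N) = true ∧
                (fun j : Fin N => (p : Fin (N+1) → Bool) j.castSucc) ∈ Set.range Ψ
              then Sum.inr ⟨_, hc.2⟩ else Sum.inl ⟨_, hmem p.1 p.2⟩) ?_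
          rintro ⟨p, hp⟩ ⟨q, hq⟩ hpq
          simp only at hpq
          by_cases h1 : (p (Fin.last N) = true ∧
              (fun j : Fin N => p j.castSucc) ∈ Set.range Ψ) <;>
            by_cases h2 : (q (Fin.last N) = true ∧
              (fun j : Fin N => q j.castSucc) ∈ Set.range Ψ)
          · -- both inr
            rw [dif_pos h1, dif_pos h2, Sum.inr.injEq, Subtype.mk.injEq] at hpq
            refine Subtype.mk_eq_mk.2 (funext fun j => ?_)
            refine Fin.lastCases ?_ (fun i => congrFun hpq i) j
            rw [h1.1, h2.1]
          · rw [dif_pos h1, dif_neg h2] at hpq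
            exact absurd hpq (by simp)
          · rw [dif_neg h1, dif_pos h2] at hpq
            exact absurd hpq (by simp)
          · -- both inl
            rw [dif_neg h1, dif_neg h2, Sum.inl.injEq, Subtype.mk.injEq] at hpq
            refine Subtype.mk_eq_mk.2 (funext fun j => ?_)
            refine Fin.lastCases ?_ (fun i => congrFun hpq i) j
            obtain ⟨xp, hxp⟩ := hp
            obtain ⟨xq, hxq⟩ := hq
            by_contra hne
            -- p last ≠ q last, both Bool
            have htp : (fun j : Fin N => p j.castSucc) = Φ' xp := by
              rw [← hxp]
            have htq : (fun j : Fin N => q j.castSucc) = Φ' xq := by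
              rw [← hxq]
            have hΦ'eq : Φ' xp = Φ' xq := by rw [← htp, ← htq]; exact hpq
            have hlastp : p (Fin.last N) = decide (h xp ≤ 0) := by
              rw [← hxp]
            have hlastq : q (Fin.last N) = decide (h xq ≤ 0) := by
              rw [← hxq]
            rcases Bool.eq_false_or_eq_true (p (Fin.last N)) with hpl | hpl
            · -- p last true
              have hxple : h xp ≤ 0 := by
                rw [hlastp] at hpl
                exact of_decide_eq_true hpl
              have hql : q (Fin.last N) = false := by
                rcases Bool.eq_false_or_eq_true (q (Fin.last N)) with h' | h'
                · exact absurd (hpl.trans h'.symm) hne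
                · exact h'
              have hxqle : 0 < h xq := by
                rw [hlastq] at hql
                simpa using of_decide_eq_false hql
              have := hdup xp xq hΦ'eq hxple hxqle
              rw [← htp] at this
              exact h1 ⟨hpl, this⟩
            · -- p last false, so q last true
              have hql : q (Fin.last N) = true := by
                rcases Bool.eq_false_or_eq_true (q (Fin.last N)) with h' | h'
                · exact h'
                · exact absurd (hpl.trans h'.symm) hne
              have hxple : 0 < h xp := by
                rw [hlastp] at hpl
                simpa using of_decide_eq_false hpl
              have hxqle : h xq ≤ 0 := by
                rw [hlastq] at hql
                exact of_decide_eq_true hql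
              have := hdup xq xp hΦ'eq.symm hxqle hxple
              rw [← hΦ'eq, ← htp] at this
              exact h2 ⟨hql, hpq ▸ this⟩
        calc Nat.card (Set.range Φ) ≤
            Nat.card (Set.range Φ') + Nat.card (Set.range Ψ) := key
          _ ≤ signBound N (m'+1) + signBound N m' := Nat.add_le_add hΦ'card hΨcard
          _ = signBound (N+1) (m'+1) := (signBound_pascal N m').symm

noncomputable def htBoolPattern (m k : ℕ) (W0 : Matrix (Fin k) (Fin m) ℝ)
    (W : ℕ → Matrix (Fin k) (Fin k) ℝ) (b : ℕ → Fin k → ℝ) (n : ℕ) (x : Fin m → ℝ) :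
    Fin n → Fin k → Bool × Bool :=
  fun d i => (decide (htPreact W0 W b x d i ≤ -1), decide ((1:ℝ) ≤ htPreact W0 W b x d i))

lemma htPreact_affine (m k : ℕ) (W0 : Matrix (Fin k) (Fin m) ℝ)
    (W : ℕ → Matrix (Fin k) (Fin k) ℝ) (b : ℕ → Fin k → ℝ) :
    ∀ (n : ℕ) (p : Fin n → Fin k → Bool × Bool),
    ∃ (L : (Fin m → ℝ) →ₗ[ℝ] (Fin k → ℝ)) (c : Fin k → ℝ),
      ∀ x, htBoolPattern m k W0 W b n x = p → htPreact W0 W b x n = L x + c := by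
  intro n
  induction n with
  | zero =>
    intro p
    refine ⟨Matrix.mulVecLin W0, b 0, fun x _ => ?_⟩
    show htPreact W0 W b x 0 = _
    simp [htPreact, Matrix.mulVecLin_apply]
  | succ n IH =>
    intro p
    classical
    obtain ⟨L, c, hL⟩ := IH (fun d => p d.castSucc)
    set q : Fin k → Bool × Bool := p (Fin.last n) with hq
    set Sel : (Fin k → ℝ) →ₗ[ℝ] (Fin k → ℝ) :=
      LinearMap.pi (fun i => if (q i).1 = true ∨ (q i).2 = true then 0 else LinearMap.proj i)
      with hSel
    set e : Fin k → ℝ := fun i => if (q i).1 then -1 else if (q i).2 then 1 else 0 with he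
    refine ⟨((W (n+1)).mulVecLin).comp (Sel.comp L),
      (W (n+1)).mulVec (Sel c + e) + b (n+1), ?_⟩
    intro x hx
    have hres : htBoolPattern m k W0 W b n x = fun d => p d.castSucc := by
      funext d i
      have h1 := congrFun (congrFun hx d.castSucc) i
      simpa [htBoolPattern, Fin.coe_castSucc] using h1
    have hprev := hL x hres
    have hclamp : (fun i => hardTanh (htPreact W0 W b x n i)) =
        Sel (htPreact W0 W b x n) + e := by
      funext i
      have hqi := congrFun (congrFun hx (Fin.last n)) i
      simp only [htBoolPattern, Fin.val_last] at hqi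
      have hfst : decide (htPreact W0 W b x n i ≤ -1) = (q i).1 := by
        rw [hq]; exact congrArg Prod.fst hqi
      have hsnd : decide ((1:ℝ) ≤ htPreact W0 W b x n i) = (q i).2 := by
        rw [hq]; exact congrArg Prod.snd hqi
      rcases Bool.eq_false_or_eq_true (q i).1 with hb1 | hb1
      · -- (q i).1 = true : h ≤ -1
        rw [hb1] at hfst
        have hle : htPreact W0 W b x n i ≤ -1 := of_decide_eq_true hfst
        have : hardTanh (htPreact W0 W b x n i) = -1 := by
          unfold hardTanh
          rw [min_eq_right (by linarith), max_eq_left hle]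
        rw [this]
        simp [hSel, he, LinearMap.pi_apply, hb1]
      · rw [hb1] at hfst
        have hgt : ¬ htPreact W0 W b x n i ≤ -1 := of_decide_eq_false hfst
        rcases Bool.eq_false_or_eq_true (q i).2 with hb2 | hb2
        · -- (q i).2 = true : 1 ≤ h
          rw [hb2] at hsnd
          have hge : (1:ℝ) ≤ htPreact W0 W b x n i := of_decide_eq_true hsnd
          have : hardTanh (htPreact W0 W b x n i) = 1 := by
            unfold hardTanh
            rw [min_eq_left hge, max_eq_right (by norm_num)]
          rw [this]
          simp [hSel, he, LinearMap.pi_apply, hb1, hb2]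
        · rw [hb2] at hsnd
          have hlt : ¬ (1:ℝ) ≤ htPreact W0 W b x n i := of_decide_eq_false hsnd
          have : hardTanh (htPreact W0 W b x n i) = htPreact W0 W b x n i := by
            unfold hardTanh
            rw [min_eq_right (by linarith), max_eq_right (by linarith)]
          rw [this]
          simp [hSel, he, LinearMap.pi_apply, hb1, hb2]
    show (W (n+1)).mulVec (fun i => hardTanh (htPreact W0 W b x n i)) + b (n+1) = _
    rw [hclamp, hprev, map_add]
    simp only [LinearMap.comp_apply, Matrix.mulVecLin_apply, Pi.add_apply]
    rw [show Sel (L x) + Sel c + e = Sel (L x) + (Sel c + e) by abel]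
    rw [Matrix.mulVec_add]
    abel

noncomputable def affLC {E : Type*} [AddCommGroup E] [Module ℝ E]
    (L : E →ₗ[ℝ] ℝ) (c : ℝ) : E →ᵃ[ℝ] ℝ :=
  AffineMap.mk (fun x => L x + c) L (by
    intro p v
    simp only [vadd_eq_add, map_add]
    ring)

@[simp] lemma affLC_apply {E : Type*} [AddCommGroup E] [Module ℝ E]
    (L : E →ₗ[ℝ] ℝ) (c : ℝ) (x : E) : affLC L c x = L x + c := rfl

lemma cell_count (m k : ℕ) (W0 : Matrix (Fin k) (Fin m) ℝ)
    (W : ℕ → Matrix (Fin k) (Fin k) ℝ) (b : ℕ → Fin k → ℝ) (n : ℕ)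
    (p : Fin n → Fin k → Bool × Bool) :
    Nat.card {v : Fin k → Bool × Bool | ∃ x, htBoolPattern m k W0 W b n x = p ∧
      (fun i => (decide (htPreact W0 W b x n i ≤ -1),
        decide ((1:ℝ) ≤ htPreact W0 W b x n i))) = v} ≤ signBound (2*k) m := by
  classical
  obtain ⟨L, c, hL⟩ := htPreact_affine m k W0 W b n p
  set g : Fin (2*k) → ((Fin m → ℝ) →ᵃ[ℝ] ℝ) := fun j =>
    if hj : (j : ℕ) < k then affLC ((LinearMap.proj ⟨j, hj⟩).comp L) (c ⟨j, hj⟩ + 1)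
    else affLC (-((LinearMap.proj (⟨(j : ℕ) - k, by omega⟩ : Fin k)).comp L))
      (1 - c ⟨(j : ℕ) - k, by omega⟩) with hg
  set Θ : (Fin m → ℝ) → Fin (2*k) → Bool := fun x j => decide (g j x ≤ 0) with hΘ
  set κ : (Fin (2*k) → Bool) → (Fin k → Bool × Bool) := fun s i =>
    (s ⟨(i : ℕ), by have := i.isLt; omega⟩, s ⟨k + (i : ℕ), by have := i.isLt; omega⟩)
    with hκ
  have hsub : {v : Fin k → Bool × Bool | ∃ x, htBoolPattern m k W0 W b n x = p ∧
      (fun i => (decide (htPreact W0 W b x n i ≤ -1),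
        decide ((1:ℝ) ≤ htPreact W0 W b x n i))) = v} ⊆ κ '' (Set.range Θ) := by
    rintro v ⟨x, hx, rfl⟩
    refine ⟨Θ x, Set.mem_range_self x, ?_⟩
    have hpre := hL x hx
    funext i
    have hval : htPreact W0 W b x n i = L x i + c i := by
      rw [hpre]; rfl
    refine Prod.ext ?_ ?_
    · -- first component
      show Θ x ⟨(i : ℕ), _⟩ = decide (htPreact W0 W b x n i ≤ -1)
      have hlt : ((⟨(i : ℕ), by have := i.isLt; omega⟩ : Fin (2*k)) : ℕ) < k := i.isLt
      simp only [hΘ, hg, dif_pos hlt]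
      rw [decide_eq_decide]
      have : (⟨((⟨(i : ℕ), by have := i.isLt; omega⟩ : Fin (2*k)) : ℕ), hlt⟩ : Fin k) = i := by
        apply Fin.ext; rfl
      rw [this]
      simp only [affLC_apply, LinearMap.comp_apply, LinearMap.proj_apply]
      constructor
      · intro h'; rw [hval]; linarith
      · intro h'; rw [hval] at h'; linarith
    · -- second component
      show Θ x ⟨k + (i : ℕ), _⟩ = decide ((1:ℝ) ≤ htPreact W0 W b x n i)
      have hge : ¬ ((⟨k + (i : ℕ), by have := i.isLt; omega⟩ : Fin (2*k)) : ℕ) < k := by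
        simp
      simp only [hΘ, hg, dif_neg hge]
      rw [decide_eq_decide]
      have : (⟨((⟨k + (i : ℕ), by have := i.isLt; omega⟩ : Fin (2*k)) : ℕ) - k,
          by have := i.isLt; omega⟩ : Fin k) = i := by
        apply Fin.ext; simp
      rw [this]
      simp only [affLC_apply, LinearMap.neg_apply, LinearMap.comp_apply, LinearMap.proj_apply]
      constructor
      · intro h'; rw [hval]; linarith
      · intro h'; rw [hval] at h'; linarith
  calc Nat.card {v : Fin k → Bool × Bool | ∃ x, htBoolPattern m k W0 W b n x = p ∧
      (fun i => (decide (htPreact W0 W b x n i ≤ -1),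
        decide ((1:ℝ) ≤ htPreact W0 W b x n i))) = v}
      ≤ Nat.card (κ '' (Set.range Θ)) := Nat.card_mono (Set.toFinite _) hsub
    _ ≤ Nat.card (Set.range Θ) := Nat.card_image_le (Set.toFinite _)
    _ ≤ signBound (2*k) m := affine_sign_card_le (2*k) m (Fin m → ℝ)
        (le_of_eq (Module.finrank_fin_fun ℝ)) g

lemma htBool_card_le (m k : ℕ) (W0 : Matrix (Fin k) (Fin m) ℝ)
    (W : ℕ → Matrix (Fin k) (Fin k) ℝ) (b : ℕ → Fin k → ℝ) :
    ∀ n : ℕ, Nat.card (Set.range (htBoolPattern m k W0 W b n)) ≤ signBound (2*k) m ^ n := by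
  intro n
  induction n with
  | zero =>
    rw [pow_zero]
    refine nat_card_set_le_one ?_
    rintro u ⟨x, rfl⟩ w ⟨y, rfl⟩
    funext d
    exact d.elim0
  | succ n IH =>
    classical
    set B := signBound (2*k) m with hB
    set S : (Fin n → Fin k → Bool × Bool) → Set (Fin k → Bool × Bool) := fun t =>
      {v : Fin k → Bool × Bool | ∃ x, htBoolPattern m k W0 W b n x = t ∧
        (fun i => (decide (htPreact W0 W b x n i ≤ -1),
          decide ((1:ℝ) ≤ htPreact W0 W b x n i))) = v} with hS
    haveI : Fintype ↥(Set.range (htBoolPattern m k W0 W b n)) := Fintype.ofFinite _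
    haveI : ∀ t : ↥(Set.range (htBoolPattern m k W0 W b n)), Fintype ↥(S t.1) :=
      fun t => Fintype.ofFinite _
    have htrunc : ∀ x, htBoolPattern m k W0 W b n x =
        fun d => htBoolPattern m k W0 W b (n+1) x d.castSucc := by
      intro x
      funext d i
      simp [htBoolPattern, Fin.coe_castSucc]
    have hlast : ∀ x, htBoolPattern m k W0 W b (n+1) x (Fin.last n) =
        fun i => (decide (htPreact W0 W b x n i ≤ -1),
          decide ((1:ℝ) ≤ htPreact W0 W b x n i)) := by
      intro x
      funext i
      simp [htBoolPattern, Fin.val_last]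
    have key : Nat.card (Set.range (htBoolPattern m k W0 W b (n+1))) ≤
        Nat.card ((t : ↥(Set.range (htBoolPattern m k W0 W b n))) × ↥(S t.1)) := by
      have hmem1 : ∀ p : ↥(Set.range (htBoolPattern m k W0 W b (n+1))),
          (fun d : Fin n => (p : Fin (n+1) → Fin k → Bool × Bool) d.castSucc) ∈
            Set.range (htBoolPattern m k W0 W b n) := by
        rintro ⟨p, x, hx⟩
        exact ⟨x, (htrunc x).trans (by rw [hx])⟩
      have hmem2 : ∀ p : ↥(Set.range (htBoolPattern m k W0 W b (n+1))),
          (p : Fin (n+1) → Fin k → Bool × Bool) (Fin.last n) ∈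
            S (fun d : Fin n => (p : Fin (n+1) → Fin k → Bool × Bool) d.castSucc) := by
        rintro ⟨p, x, hx⟩
        refine ⟨x, ?_, ?_⟩
        · exact (htrunc x).trans (by rw [hx])
        · exact (hlast x).symm.trans (by rw [hx])
      refine Nat.card_le_card_of_injective
        (fun p => ⟨⟨_, hmem1 p⟩, ⟨_, hmem2 p⟩⟩) ?_
      intro a1 a2 hab
      have e1 : (fun d : Fin n => (a1 : Fin (n+1) → Fin k → Bool × Bool) d.castSucc) =
          (fun d : Fin n => (a2 : Fin (n+1) → Fin k → Bool × Bool) d.castSucc) :=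
        congrArg (fun s : (t : ↥(Set.range (htBoolPattern m k W0 W b n))) × ↥(S t.1) =>
          (s.1 : Fin n → Fin k → Bool × Bool)) hab
      have e2 : (a1 : Fin (n+1) → Fin k → Bool × Bool) (Fin.last n) =
          (a2 : Fin (n+1) → Fin k → Bool × Bool) (Fin.last n) :=
        congrArg (fun s : (t : ↥(Set.range (htBoolPattern m k W0 W b n))) × ↥(S t.1) =>
          (s.2 : Fin k → Bool × Bool)) hab
      refine Subtype.ext (funext fun d => ?_)
      refine Fin.lastCases e2 (fun i => congrFun e1 i) d
    have hsig : Nat.card ((t : ↥(Set.range (htBoolPattern m k W0 W b n))) × ↥(S t.1)) ≤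
        Nat.card (Set.range (htBoolPattern m k W0 W b n)) * B := by
      rw [Nat.card_eq_fintype_card, Fintype.card_sigma]
      have hb : ∀ t : ↥(Set.range (htBoolPattern m k W0 W b n)),
          Fintype.card ↥(S t.1) ≤ B := by
        intro t
        rw [← Nat.card_eq_fintype_card]
        exact cell_count m k W0 W b n t.1
      calc ∑ t : ↥(Set.range (htBoolPattern m k W0 W b n)), Fintype.card ↥(S t.1)
          ≤ ∑ _t : ↥(Set.range (htBoolPattern m k W0 W b n)), B :=
            Finset.sum_le_sum fun t _ => hb t
        _ = Fintype.card ↥(Set.range (htBoolPattern m k W0 W b n)) * B := by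
            rw [Finset.sum_const, Finset.card_univ, smul_eq_mul]
        _ = Nat.card (Set.range (htBoolPattern m k W0 W b n)) * B := by
            rw [Nat.card_eq_fintype_card]
    calc Nat.card (Set.range (htBoolPattern m k W0 W b (n+1)))
        ≤ Nat.card ((t : ↥(Set.range (htBoolPattern m k W0 W b n))) × ↥(S t.1)) := key
      _ ≤ Nat.card (Set.range (htBoolPattern m k W0 W b n)) * B := hsig
      _ ≤ B ^ n * B := Nat.mul_le_mul_right B IH
      _ = B ^ (n+1) := (pow_succ B n).symm


/-- **(Tight) upper bound on the number of activation patterns of a hard-tanh network.**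
For a fully connected hard-tanh network with `n` hidden layers of width `k` and inputs in
`ℝ^m`, the number of distinct activation patterns realized as the input ranges over all of
`ℝ^m` is at most `(∑_{i=0}^m C(2k,i))^n = O((2k)^{mn})`, for every choice of weights and
biases. -/
theorem card_htActivationPatterns_le (m k n : ℕ)
    (W0 : Matrix (Fin k) (Fin m) ℝ) (W : ℕ → Matrix (Fin k) (Fin k) ℝ)
    (b : ℕ → Fin k → ℝ) :
    Nat.card (Set.range (htActivationPattern m k n W0 W b)) ≤
      (∑ i ∈ Finset.range (m + 1), Nat.choose (2 * k) i) ^ n := by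
  classical
  have hcomp : htActivationPattern m k n W0 W b =
      (fun q : Fin n → Fin k → Bool × Bool => fun d i =>
        if (q d i).1 then (-1 : ℤ) else if (q d i).2 then 1 else 0) ∘
      htBoolPattern m k W0 W b n := by
    funext x
    funext d i
    by_cases h1 : htPreact W0 W b x d i ≤ -1 <;>
      by_cases h2 : (1:ℝ) ≤ htPreact W0 W b x d i <;>
      simp [htActivationPattern, htBoolPattern, Function.comp, h1, h2]
  rw [hcomp, Set.range_comp]
  calc Nat.card ((fun q : Fin n → Fin k → Bool × Bool => fun d i =>
        if (q d i).1 then (-1 : ℤ) else if (q d i).2 then 1 else 0) ''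
        Set.range (htBoolPattern m k W0 W b n))
      ≤ Nat.card (Set.range (htBoolPattern m k W0 W b n)) :=
        Nat.card_image_le (Set.toFinite _)
    _ ≤ signBound (2*k) m ^ n := htBool_card_le m k W0 W b n
    _ = (∑ i ∈ Finset.range (m + 1), Nat.choose (2 * k) i) ^ n := rfl
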